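/- For γ > 0 and probability vectors p = (p₁, p₂), q = (q₁, q₂) with entries in (0,1) and p₁+p₂ = q₁+q₂ = 1, the density power divergence D_γ(p,q) = (q₁^{γ+1}+q₂^{γ+1}) − ((γ+1)/γ)(p₁q₁^γ + p₂q₂^γ) + (1/γ)(p₁^{γ+1}+p₂^{γ+1}) is nonnegative, and equals zero if and only if p = q. -/
import Mathlib


open Real

private lemma dpd_pt_strict {γ p q : ℝ} (hγ : 0 < γ) (hp : 0 < p) (hq : 0 < q)
    (hne : p ≠ q) :
    γ * q ^ (γ + 1) + p ^ (γ + 1) - (γ + 1) * (p * q ^ γ) > 0 := by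
  set s : ℝ := p / q - 1 with hs_def
  have hpq : 0 < p / q := div_pos hp hq
  have hs : -1 ≤ s := by simp only [hs_def]; linarith
  have hs' : s ≠ 0 := by
    simp only [hs_def, sub_ne_zero]
    intro h
    exact hne (by field_simp at h; linarith)
  have key : 1 + (γ + 1) * s < (1 + s) ^ (γ + 1) :=
    one_add_mul_self_lt_rpow_one_add hs hs' (by linarith)
  have h1s : 1 + s = p / q := by simp [hs_def]
  rw [h1s] at key
  have hq1 : (0:ℝ) < q ^ (γ + 1) := rpow_pos_of_pos hq _
  have key2 : (1 + (γ + 1) * s) * q ^ (γ + 1) < (p / q) ^ (γ + 1) * q ^ (γ + 1) :=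
    mul_lt_mul_of_pos_right key hq1
  have e2 : (p / q) ^ (γ + 1) * q ^ (γ + 1) = p ^ (γ + 1) := by
    rw [Real.div_rpow hp.le hq.le]
    field_simp
  have eγ : q ^ (γ + 1) = q ^ γ * q := by
    rw [Real.rpow_add hq, Real.rpow_one]
  have e1 : (1 + (γ + 1) * s) * q ^ (γ + 1) = (γ + 1) * (p * q ^ γ) - γ * q ^ (γ + 1) := by
    rw [hs_def, eγ]
    field_simp
    ring
  rw [e2, e1] at key2
  linarith

private lemma dpd_pt {γ p q : ℝ} (hγ : 0 < γ) (hp : 0 < p) (hq : 0 < q) :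
    0 ≤ γ * q ^ (γ + 1) + p ^ (γ + 1) - (γ + 1) * (p * q ^ γ) ∧
    (γ * q ^ (γ + 1) + p ^ (γ + 1) - (γ + 1) * (p * q ^ γ) = 0 ↔ p = q) := by
  by_cases hne : p = q
  · subst hne
    have eγ : p ^ (γ + 1) = p ^ γ * p := by
      rw [Real.rpow_add hp, Real.rpow_one]
    constructor
    · rw [eγ]; ring_nf; exact le_refl _
    · constructor <;> intro _ <;> [rfl; (rw [eγ]; ring)]
  · have h := dpd_pt_strict hγ hp hq hne
    exact ⟨h.le, by constructor <;> intro h' <;> [exact absurd h' (by linarith); exact absurd h' hne]⟩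

/-- The density power divergence with `γ > 0` between two-point probability vectors is
nonnegative, and vanishes iff the two vectors coincide. -/
theorem dpd_nonneg_and_eq_zero_iff (γ p₁ p₂ q₁ q₂ : ℝ) (hγ : 0 < γ)
    (hp₁ : p₁ ∈ Set.Ioo (0:ℝ) 1) (hp₂ : p₂ ∈ Set.Ioo (0:ℝ) 1)
    (hq₁ : q₁ ∈ Set.Ioo (0:ℝ) 1) (hq₂ : q₂ ∈ Set.Ioo (0:ℝ) 1)
    (hp : p₁ + p₂ = 1) (hq : q₁ + q₂ = 1) :
    0 ≤ (q₁ ^ (γ + 1) + q₂ ^ (γ + 1)) -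
          ((γ + 1) / γ) * (p₁ * q₁ ^ γ + p₂ * q₂ ^ γ) +
          (1 / γ) * (p₁ ^ (γ + 1) + p₂ ^ (γ + 1)) ∧
    ((q₁ ^ (γ + 1) + q₂ ^ (γ + 1)) -
          ((γ + 1) / γ) * (p₁ * q₁ ^ γ + p₂ * q₂ ^ γ) +
          (1 / γ) * (p₁ ^ (γ + 1) + p₂ ^ (γ + 1)) = 0 ↔ p₁ = q₁ ∧ p₂ = q₂) := by
  obtain ⟨h1, e1⟩ := dpd_pt hγ hp₁.1 hq₁.1
  obtain ⟨h2, e2⟩ := dpd_pt hγ hp₂.1 hq₂.1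
  set T₁ := γ * q₁ ^ (γ + 1) + p₁ ^ (γ + 1) - (γ + 1) * (p₁ * q₁ ^ γ) with hT₁
  set T₂ := γ * q₂ ^ (γ + 1) + p₂ ^ (γ + 1) - (γ + 1) * (p₂ * q₂ ^ γ) with hT₂
  have hD : (q₁ ^ (γ + 1) + q₂ ^ (γ + 1)) -
          ((γ + 1) / γ) * (p₁ * q₁ ^ γ + p₂ * q₂ ^ γ) +
          (1 / γ) * (p₁ ^ (γ + 1) + p₂ ^ (γ + 1)) = (1 / γ) * (T₁ + T₂) := by
    rw [hT₁, hT₂]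
    field_simp
    ring
  rw [hD]
  have hγ' : (0:ℝ) < 1 / γ := by positivity
  constructor
  · positivity
  · constructor
    · intro h
      have hsum : T₁ + T₂ = 0 := by
        have := mul_eq_zero.mp h
        rcases this with h' | h'
        · exact absurd h' (by positivity)
        · exact h'
      have hT1 : T₁ = 0 := by linarith
      have hT2 : T₂ = 0 := by linarith
      exact ⟨e1.mp hT1, e2.mp hT2⟩
    · rintro ⟨ha, hb⟩
      rw [e1.mpr ha, e2.mpr hb]
      ring
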